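/- Let 1 < p, q < ∞ and suppose the connected metric two-measure space X = (X,d,ν,μ) satisfies a (q,p)-balance condition. Assume further that ν(B')/ν(B) ≤ C (r'/diam(B))^{σ'} and μ(B')/μ(B) ≥ 2^{-s'} (r'/diam(B))^{s'} for all balls B, B'=B(x',r') with x' ∈ B, 0 < r' ≤ diam(B), for some constants σ', s' > 0. Then for every 0 < δ ≤ q − 1 there exists 0 < ε ≤ p − 1 such that X satisfies a (q−δ, p−ε)-balance condition; in fact any ε with 1/(p−ε) − 1/p ≤ (1/(q−δ) − 1/q)·σ'/s' works. -/

import Mathlib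

open MeasureTheory Metric Set ENNReal

noncomputable section

/-- `ν` is doubling with constant `c`. -/
def IsDoubling {X : Type*} [MetricSpace X] [MeasurableSpace X]
    (ν : Measure X) (c : ℝ) : Prop :=
  ∀ (x : X) (r : ℝ), 0 < r → ν (Metric.ball x (2 * r)) ≤ ENNReal.ofReal c * ν (Metric.ball x r)

/-- `ν` is positive and finite on all balls. -/
def FinitePosOnBalls {X : Type*} [MetricSpace X] [MeasurableSpace X]
    (ν : Measure X) : Prop :=
  ∀ (x : X) (r : ℝ), 0 < r → 0 < ν (Metric.ball x r) ∧ ν (Metric.ball x r) < ⊤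

/-- The `(q,p)`-balance condition with constant `C`:
`(diam B'/diam B) (ν B'/ν B)^{1/q} ≤ C^{1/p} (μ B'/μ B)^{1/p}` for all balls
`B`, `B' = B(x',r')` with `x' ∈ B` and `0 < r' ≤ diam B`. -/
def Balance {X : Type*} [MetricSpace X] [MeasurableSpace X]
    (ν μ : Measure X) (q p C : ℝ) : Prop :=
  ∀ (x : X) (R : ℝ) (x' : X) (r' : ℝ), 0 < R → x' ∈ Metric.ball x R → 0 < r' →
    r' ≤ Metric.diam (Metric.ball x R) →
    (Metric.diam (Metric.ball x' r') / Metric.diam (Metric.ball x R)) *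
        ((ν (Metric.ball x' r')).toReal / (ν (Metric.ball x R)).toReal) ^ (1 / q)
      ≤ C ^ (1 / p) *
        ((μ (Metric.ball x' r')).toReal / (μ (Metric.ball x R)).toReal) ^ (1 / p)

/-- The `p`-balance condition with constant `C`:
`(diam B'/diam B)^p (ν B'/ν B) ≤ C (μ B'/μ B)` for all balls
`B`, `B' = B(x',r')` with `x' ∈ B` and `0 < r' ≤ diam B`. -/
def PBalance {X : Type*} [MetricSpace X] [MeasurableSpace X]
    (ν μ : Measure X) (p C : ℝ) : Prop :=
  ∀ (x : X) (R : ℝ) (x' : X) (r' : ℝ), 0 < R → x' ∈ Metric.ball x R → 0 < r' →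
    r' ≤ Metric.diam (Metric.ball x R) →
    (Metric.diam (Metric.ball x' r') / Metric.diam (Metric.ball x R)) ^ p *
        ((ν (Metric.ball x' r')).toReal / (ν (Metric.ball x R)).toReal)
      ≤ C * ((μ (Metric.ball x' r')).toReal / (μ (Metric.ball x R)).toReal)

/-- if `X` satisfies a `(q,p)`-balance condition and the measures satisfy the
quantitative decay estimates `ν(B')/ν(B) ≤ Cν (r'/diam B)^{σ'}` and
`μ(B')/μ(B) ≥ 2^{-s'} (r'/diam B)^{s'}`, then for every `0 < δ ≤ q-1`, every
`0 < ε ≤ p-1` with `1/(p-ε) - 1/p ≤ (1/(q-δ) - 1/q)·σ'/s'` yields a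
`(q-δ, p-ε)`-balance condition. -/
theorem stmt6 {X : Type*} [MetricSpace X] [MeasurableSpace X] [BorelSpace X]
    [ConnectedSpace X] (ν μ : Measure X) (q p : ℝ) (hq : 1 < q) (hp : 1 < p)
    (cν cμ : ℝ) (hcν : 1 < cν) (hcμ : 1 < cμ)
    (hνd : IsDoubling ν cν) (hμd : IsDoubling μ cμ)
    (hνf : FinitePosOnBalls ν) (hμf : FinitePosOnBalls μ)
    (Cb : ℝ) (hCb : 0 < Cb) (hbal : Balance ν μ q p Cb)
    (Cν σ' s' : ℝ) (hCν : 0 < Cν) (hσ' : 0 < σ') (hs' : 0 < s')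
    (hν : ∀ (x : X) (R : ℝ) (x' : X) (r' : ℝ), 0 < R → x' ∈ Metric.ball x R → 0 < r' →
      r' ≤ Metric.diam (Metric.ball x R) →
      (ν (Metric.ball x' r')).toReal / (ν (Metric.ball x R)).toReal
        ≤ Cν * (r' / Metric.diam (Metric.ball x R)) ^ σ')
    (hμ : ∀ (x : X) (R : ℝ) (x' : X) (r' : ℝ), 0 < R → x' ∈ Metric.ball x R → 0 < r' →
      r' ≤ Metric.diam (Metric.ball x R) →
      (2 : ℝ) ^ (-s') * (r' / Metric.diam (Metric.ball x R)) ^ s'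
        ≤ (μ (Metric.ball x' r')).toReal / (μ (Metric.ball x R)).toReal) :
    ∀ δ : ℝ, 0 < δ → δ ≤ q - 1 →
      ∀ ε : ℝ, 0 < ε → ε ≤ p - 1 →
        1 / (p - ε) - 1 / p ≤ (1 / (q - δ) - 1 / q) * σ' / s' →
        ∃ C > 0, Balance ν μ (q - δ) (p - ε) C := by
  intro δ hδ hδq ε hε hεp hcond
  have hqδ0 : 0 < q - δ := by linarith
  have hpε0 : 0 < p - ε := by linarith
  set α := 1 / (q - δ) - 1 / q with hα_def
  set β := 1 / (p - ε) - 1 / p with hβ_def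
  have hα : 0 < α := by
    have h : 1 / q < 1 / (q - δ) := by
      apply one_div_lt_one_div_of_lt hqδ0; linarith
    simp only [hα_def]; linarith
  have hβ : 0 < β := by
    have h : 1 / p < 1 / (p - ε) := by
      apply one_div_lt_one_div_of_lt hpε0; linarith
    simp only [hβ_def]; linarith
  have hβα : s' * β ≤ σ' * α := by
    rw [le_div_iff₀ hs'] at hcond
    nlinarith
  set K := Cb ^ (1 / p) * Cν ^ α * (2 : ℝ) ^ (s' * β) with hK_def
  have hK : 0 < K := by
    have h1 := Real.rpow_pos_of_pos hCb (1 / p)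
    have h2 := Real.rpow_pos_of_pos hCν α
    have h3 := Real.rpow_pos_of_pos (by norm_num : (0:ℝ) < 2) (s' * β)
    exact mul_pos (mul_pos h1 h2) h3
  refine ⟨K ^ (p - ε), Real.rpow_pos_of_pos hK _, ?_⟩
  intro x R x' r' hR hx' hr' hle
  set D := Metric.diam (Metric.ball x R) with hD_def
  set d' := Metric.diam (Metric.ball x' r') with hd'_def
  have hD : 0 < D := lt_of_lt_of_le hr' hle
  have hd' : 0 ≤ d' := Metric.diam_nonneg
  set u := r' / D with hu_def
  have hu0 : 0 < u := div_pos hr' hD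
  have hu1 : u ≤ 1 := (div_le_one hD).2 hle
  set a := (ν (Metric.ball x' r')).toReal / (ν (Metric.ball x R)).toReal with ha_def
  set b := (μ (Metric.ball x' r')).toReal / (μ (Metric.ball x R)).toReal with hb_def
  have ha : 0 < a :=
    div_pos (ENNReal.toReal_pos (hνf x' r' hr').1.ne' (hνf x' r' hr').2.ne)
      (ENNReal.toReal_pos (hνf x R hR).1.ne' (hνf x R hR).2.ne)
  have hb : 0 < b :=
    div_pos (ENNReal.toReal_pos (hμf x' r' hr').1.ne' (hμf x' r' hr').2.ne)
      (ENNReal.toReal_pos (hμf x R hR).1.ne' (hμf x R hR).2.ne)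
  have h1 := hbal x R x' r' hR hx' hr' hle
  have h2 := hν x R x' r' hR hx' hr' hle
  have h3 := hμ x R x' r' hR hx' hr' hle
  rw [← hd'_def, ← ha_def, ← hb_def] at h1
  rw [← ha_def, ← hu_def] at h2
  rw [← hb_def, ← hu_def] at h3
  have e1 : a ^ (1 / (q - δ)) = a ^ (1 / q) * a ^ α := by
    rw [← Real.rpow_add ha, hα_def]; ring_nf
  have e2 : b ^ (1 / (p - ε)) = b ^ (1 / p) * b ^ β := by
    rw [← Real.rpow_add hb, hβ_def]; ring_nf
  have eC : (K ^ (p - ε)) ^ (1 / (p - ε)) = K := by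
    rw [← Real.rpow_mul hK.le, mul_one_div, div_self hpε0.ne', Real.rpow_one]
  rw [e1, e2, eC]
  have hB : a ^ α ≤ Cν ^ α * u ^ (σ' * α) := by
    calc a ^ α ≤ (Cν * u ^ σ') ^ α := Real.rpow_le_rpow ha.le h2 hα.le
      _ = Cν ^ α * u ^ (σ' * α) := by
        rw [Real.mul_rpow hCν.le (Real.rpow_nonneg hu0.le _), ← Real.rpow_mul hu0.le]
  have hCc : u ^ (σ' * α) ≤ (2 : ℝ) ^ (s' * β) * b ^ β := by
    have h4 : ((2 : ℝ) ^ (-s') * u ^ s') ^ β ≤ b ^ β :=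
      Real.rpow_le_rpow (by positivity) h3 hβ.le
    have h5 : ((2 : ℝ) ^ (-s') * u ^ s') ^ β
        = (2 : ℝ) ^ (-(s' * β)) * u ^ (s' * β) := by
      rw [Real.mul_rpow (by positivity) (Real.rpow_nonneg hu0.le _),
        ← Real.rpow_mul (by norm_num : (0:ℝ) ≤ 2), ← Real.rpow_mul hu0.le, neg_mul]
    have h6 : u ^ (σ' * α) ≤ u ^ (s' * β) :=
      Real.rpow_le_rpow_of_exponent_ge hu0 hu1 hβα
    have h7 : (2 : ℝ) ^ (s' * β) * ((2 : ℝ) ^ (-(s' * β)) * u ^ (s' * β))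
        = u ^ (s' * β) := by
      rw [← mul_assoc, ← Real.rpow_add two_pos]
      simp
    calc u ^ (σ' * α) ≤ u ^ (s' * β) := h6
      _ = (2 : ℝ) ^ (s' * β) * ((2 : ℝ) ^ (-(s' * β)) * u ^ (s' * β)) := h7.symm
      _ ≤ (2 : ℝ) ^ (s' * β) * b ^ β := by
          apply mul_le_mul_of_nonneg_left _ (Real.rpow_nonneg (by norm_num) _)
          rw [← h5]; exact h4
  have hbp : 0 ≤ Cb ^ (1 / p) * b ^ (1 / p) := by positivity
  calc d' / D * (a ^ (1 / q) * a ^ α)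
      = (d' / D * a ^ (1 / q)) * a ^ α := by ring
    _ ≤ (Cb ^ (1 / p) * b ^ (1 / p)) * a ^ α :=
        mul_le_mul_of_nonneg_right h1 (Real.rpow_nonneg ha.le _)
    _ ≤ (Cb ^ (1 / p) * b ^ (1 / p)) * (Cν ^ α * u ^ (σ' * α)) :=
        mul_le_mul_of_nonneg_left hB hbp
    _ ≤ (Cb ^ (1 / p) * b ^ (1 / p)) * (Cν ^ α * ((2 : ℝ) ^ (s' * β) * b ^ β)) := by
        apply mul_le_mul_of_nonneg_left _ hbp
        exact mul_le_mul_of_nonneg_left hCc (Real.rpow_nonneg hCν.le _)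
    _ = K * (b ^ (1 / p) * b ^ β) := by rw [hK_def]; ring
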